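/- Let p be a prime, ω = exp(2πi/p) ∈ ℂ, and f : ℤ/pℤ → ℤ/pℤ a bijection. Then the following are equivalent: (i) for every a, b ∈ ℤ/pℤ the number (1/p) · ∑_{x ∈ ℤ/pℤ} ω^{a·f(x) + b·x} is an algebraic integer; (ii) f is a linear bijection, i.e., there exist α, β ∈ ℤ/pℤ with α ≠ 0 such that f(x) = α·x + β for all x ∈ ℤ/pℤ. (This is the integrality condition making the isometry I_f of the character ring of the cyclic group C_p a perfect isometry.) -/

import Mathlib

noncomputable def Complex.abs : AbsoluteValue ℂ ℝ where
  toFun z := ‖z‖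
  map_mul' := norm_mul
  nonneg' := norm_nonneg
  eq_zero' _ := norm_eq_zero
  add_le' := norm_add_le

lemma Complex.abs_apply' (z : ℂ) : Complex.abs z = ‖z‖ := rfl
lemma Complex.abs_conj (z : ℂ) : Complex.abs ((starRingEnd ℂ) z) = Complex.abs z := by
  simp [Complex.abs_apply']
lemma Complex.abs_ofReal (r : ℝ) : Complex.abs (r : ℂ) = |r| := by simp [Complex.abs_apply']
lemma Complex.abs_natCast (n : ℕ) : Complex.abs (n : ℂ) = n := by simp [Complex.abs_apply']
lemma Complex.re_le_abs (z : ℂ) : z.re ≤ Complex.abs z := Complex.re_le_norm z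
lemma Complex.sq_abs (z : ℂ) : Complex.abs z ^ 2 = Complex.normSq z := Complex.sq_norm z
lemma Complex.normSq_eq_abs (z : ℂ) : Complex.normSq z = Complex.abs z ^ 2 :=
  (Complex.sq_norm z).symm

lemma all_eq_of_abs_sum {ι : Type*} [Fintype ι] (t : ι → ℂ)
    (h1 : ∀ i, Complex.abs (t i) = 1)
    (h : (Fintype.card ι : ℝ) ≤ Complex.abs (∑ i, t i)) :
    ∀ i j, t i = t j := by
  set S := ∑ i, t i with hS
  have habs : Complex.abs S ≤ Fintype.card ι := by
    calc Complex.abs S ≤ ∑ i, Complex.abs (t i) := Complex.abs.sum_le _ _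
      _ = Fintype.card ι := by simp [h1]
  have heq : Complex.abs S = Fintype.card ι := le_antisymm habs h
  rcases Nat.eq_zero_or_pos (Fintype.card ι) with hc | hc
  · have : IsEmpty ι := Fintype.card_eq_zero_iff.mp hc
    intro i; exact (this.false i).elim
  have hcpos : (0:ℝ) < Fintype.card ι := by exact_mod_cast hc
  have hSabs : Complex.abs S ≠ 0 := by rw [heq]; positivity
  set u : ℂ := S / Complex.abs S with hu
  have hune : (starRingEnd ℂ) u ≠ 0 := by
    simp only [hu, map_div₀, ne_eq, div_eq_zero_iff, map_eq_zero, not_or]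
    constructor
    · exact fun h0 => hSabs (by simp [h0])
    · simpa using hSabs
  have hcu : (starRingEnd ℂ) u * S = (Complex.abs S : ℂ) := by
    rw [hu, map_div₀, Complex.conj_ofReal, div_mul_eq_mul_div, mul_comm,
      Complex.mul_conj, Complex.normSq_eq_abs]
    push_cast
    rw [sq, mul_div_assoc, div_self (by exact_mod_cast hSabs), mul_one]
  have hre : ∑ i, ((starRingEnd ℂ) u * t i).re = (Fintype.card ι : ℝ) := by
    have : (starRingEnd ℂ) u * S = ∑ i, (starRingEnd ℂ) u * t i := by
      rw [hS, Finset.mul_sum]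
    rw [← Complex.re_sum, ← this, hcu, Complex.ofReal_re, heq]
  have hle : ∀ i ∈ Finset.univ, ((starRingEnd ℂ) u * t i).re ≤ (1:ℝ) := by
    intro i _
    calc ((starRingEnd ℂ) u * t i).re ≤ Complex.abs ((starRingEnd ℂ) u * t i) :=
          Complex.re_le_abs _
      _ = Complex.abs u * Complex.abs (t i) := by rw [map_mul, Complex.abs_conj]
      _ = 1 := by
          rw [h1 i, mul_one, hu, map_div₀, Complex.abs_ofReal, abs_of_pos (heq ▸ hcpos), heq]
          exact div_self (ne_of_gt hcpos)
  have hall : ∀ i ∈ Finset.univ, ((starRingEnd ℂ) u * t i).re = (1:ℝ) := by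
    rw [← Finset.sum_eq_sum_iff_of_le hle]
    rw [hre]; simp
  have hone : ∀ i, (starRingEnd ℂ) u * t i = 1 := by
    intro i
    have h1' : Complex.abs ((starRingEnd ℂ) u * t i) = 1 := by
      rw [map_mul, Complex.abs_conj, h1 i, mul_one, hu, map_div₀, Complex.abs_ofReal,
        abs_of_pos (heq ▸ hcpos), heq]
      exact div_self (ne_of_gt hcpos)
    have hrei := hall i (Finset.mem_univ i)
    set w := (starRingEnd ℂ) u * t i
    have hnsq : Complex.normSq w = 1 := by
      rw [← Complex.sq_abs, h1']; norm_num
    have him : w.im = 0 := by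
      have := Complex.normSq_apply w
      nlinarith [this, hnsq, hrei]
    exact Complex.ext (by simp [hrei]) (by simp [him])
  intro i j
  exact mul_left_cancel₀ hune (by rw [hone i, hone j])

lemma abs_one_of_pow {w : ℂ} {n : ℕ} (hn : n ≠ 0) (h : w ^ n = 1) : Complex.abs w = 1 := by
  have h2 : Complex.abs w ^ n = 1 := by rw [← map_pow, h, map_one]
  by_contra hne
  rcases lt_or_gt_of_ne hne with hlt | hgt
  · have := pow_lt_one₀ (Complex.abs.nonneg _) hlt hn
    rw [h2] at this; exact lt_irrefl _ this
  · have := one_lt_pow₀ hgt hn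
    rw [h2] at this; exact lt_irrefl _ this

set_option maxHeartbeats 1000000 in
open IntermediateField in
lemma dichotomy {p : ℕ} [Fact p.Prime] {ω : ℂ} (hprim : IsPrimitiveRoot ω p)
    (g : ZMod p → ZMod p)
    (hint : IsIntegral ℤ ((1 / (p:ℂ)) * ∑ x : ZMod p, ω ^ (g x).val)) :
    (∑ x : ZMod p, ω ^ (g x).val = 0) ∨ ∀ x, g x = g 0 := by
  classical
  have hppos : 0 < p := (Fact.out : p.Prime).pos
  have hpC : (p:ℂ) ≠ 0 := by exact_mod_cast hppos.ne'
  have hωp : ω ^ p = 1 := hprim.pow_eq_one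
  have hωintZ : IsIntegral ℤ ω := hprim.isIntegral hppos
  have hωint : IsIntegral ℚ ω := hωintZ.tower_top
  haveI : FiniteDimensional ℚ ℚ⟮ω⟯ := adjoin.finiteDimensional hωint
  set K := ℚ⟮ω⟯
  set ζ : K := AdjoinSimple.gen ℚ ω with hζdef
  have hζω : (algebraMap K ℂ) ζ = ω := rfl
  have hζp : ζ ^ p = 1 := by
    apply Subtype.ext
    push_cast
    try exact hωp
  set z : K := (p:K)⁻¹ * ∑ x : ZMod p, ζ ^ (g x).val with hz
  have hzmap : algebraMap K ℂ z = (1 / (p:ℂ)) * ∑ x : ZMod p, ω ^ (g x).val := by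
    rw [hz, map_mul, map_inv₀, map_natCast, map_sum, one_div]
    congr 1
  have hzint : IsIntegral ℤ z := by
    rw [← isIntegral_algebraMap_iff (algebraMap K ℂ).injective, hzmap]
    exact hint
  set N : ℚ := Algebra.norm ℚ z with hN
  have hNint : IsIntegral ℤ N := Algebra.isIntegral_norm ℚ hzint
  obtain ⟨n, hn⟩ : ∃ n : ℤ, (n:ℚ) = N := IsIntegrallyClosed.isIntegral_iff.mp hNint
  have hσ : ∀ σ : K →ₐ[ℚ] ℂ, Complex.abs (σ z) ≤ 1 := by
    intro σ
    have hσζ : Complex.abs (σ ζ) = 1 :=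
      abs_one_of_pow hppos.ne' (by rw [← map_pow, hζp, map_one])
    have hσz : σ z = (p:ℂ)⁻¹ * ∑ x : ZMod p, (σ ζ) ^ (g x).val := by
      rw [hz, map_mul, map_inv₀, map_natCast, map_sum]
      congr 1
      exact Finset.sum_congr rfl fun x _ => by rw [map_pow]
    rw [hσz, map_mul, map_inv₀, Complex.abs_natCast]
    have hb : Complex.abs (∑ x : ZMod p, (σ ζ) ^ (g x).val) ≤ p := by
      calc Complex.abs (∑ x : ZMod p, (σ ζ) ^ (g x).val)
          ≤ ∑ x : ZMod p, Complex.abs ((σ ζ) ^ (g x).val) := Complex.abs.sum_le _ _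
        _ = ∑ _x : ZMod p, (1:ℝ) :=
            Finset.sum_congr rfl fun x _ => by rw [map_pow, hσζ, one_pow]
        _ = p := by simp [ZMod.card]
    rw [inv_mul_le_iff₀ (by exact_mod_cast hppos)]
    calc Complex.abs (∑ x : ZMod p, (σ ζ) ^ (g x).val) ≤ p := hb
      _ ≤ (p:ℝ) * 1 := by rw [mul_one]
  have hprod : |(N:ℝ)| = ∏ σ : K →ₐ[ℚ] ℂ, Complex.abs (σ z) := by
    have h1 := Algebra.norm_eq_prod_embeddings ℚ ℂ z
    have h2 : Complex.abs ((algebraMap ℚ ℂ) N) = ∏ σ : K →ₐ[ℚ] ℂ, Complex.abs (σ z) := by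
      rw [h1, map_prod]
    rwa [show (algebraMap ℚ ℂ) N = ((N:ℝ):ℂ) by push_cast; rfl, Complex.abs_ofReal] at h2
  by_cases hN0 : N = 0
  · left
    have hz0 : z = 0 := by
      by_contra hz0
      exact absurd (hN ▸ hN0) (Algebra.norm_ne_zero_iff.mpr hz0)
    have h3 := hzmap
    rw [hz0, map_zero] at h3
    rcases mul_eq_zero.mp h3.symm with h | h
    · exact absurd h (by simp [hpC])
    · exact h
  · right
    have hn0 : n ≠ 0 := fun h => hN0 (by rw [← hn, h]; norm_num)
    have hNge : (1:ℝ) ≤ |(N:ℝ)| := by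
      rw [← hn]
      push_cast
      rw [← Int.cast_abs]
      exact_mod_cast Int.one_le_abs (by exact_mod_cast hn0)
    set σ₀ : K →ₐ[ℚ] ℂ := K.val with hσ₀
    have hfac : (1:ℝ) ≤ Complex.abs (σ₀ z) := by
      have hrest : ∏ σ ∈ Finset.univ.erase σ₀, Complex.abs (σ z) ≤ 1 :=
        Finset.prod_le_one (fun σ _ => Complex.abs.nonneg _) (fun σ _ => hσ σ)
      have hsplit : |(N:ℝ)| = Complex.abs (σ₀ z) * ∏ σ ∈ Finset.univ.erase σ₀, Complex.abs (σ z) := by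
        rw [hprod, ← Finset.mul_prod_erase _ _ (Finset.mem_univ σ₀)]
      calc (1:ℝ) ≤ |(N:ℝ)| := hNge
        _ ≤ Complex.abs (σ₀ z) * 1 := by
            rw [hsplit]
            exact mul_le_mul_of_nonneg_left hrest (Complex.abs.nonneg _)
        _ = Complex.abs (σ₀ z) := mul_one _
    have hσ₀z : σ₀ z = (1 / (p:ℂ)) * ∑ x : ZMod p, ω ^ (g x).val := hzmap
    have hSge : (p:ℝ) ≤ Complex.abs (∑ x : ZMod p, ω ^ (g x).val) := by
      have h4 := hfac
      rw [hσ₀z, map_mul, map_div₀, map_one, Complex.abs_natCast] at h4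
      rw [div_mul_eq_mul_div, one_mul, le_div_iff₀ (by exact_mod_cast hppos), one_mul] at h4
      exact h4
    have habs1 : ∀ x : ZMod p, Complex.abs (ω ^ (g x).val) = 1 := fun x => by
      rw [map_pow, abs_one_of_pow hppos.ne' hωp, one_pow]
    have hall := all_eq_of_abs_sum (fun x : ZMod p => ω ^ (g x).val) habs1
      (by rw [ZMod.card]; exact hSge)
    intro x
    have h5 := hall x 0
    have hval := hprim.pow_inj (ZMod.val_lt _) (ZMod.val_lt _) h5
    exact ZMod.val_injective p hval

section Helpers
variable {p : ℕ} [Fact p.Prime] {ω : ℂ}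

lemma epow_mod (h1 : ω ^ p = 1) (m : ℕ) : ω ^ m = ω ^ (m % p) := by
  conv_lhs => rw [← Nat.mod_add_div m p, pow_add, pow_mul, h1, one_pow, mul_one]

lemma epow_add (h1 : ω ^ p = 1) (u v : ZMod p) :
    ω ^ (u + v).val = ω ^ u.val * ω ^ v.val := by
  rw [← pow_add, ZMod.val_add, ← epow_mod h1]

lemma sum_epow (hprim : IsPrimitiveRoot ω p) :
    ∑ y : ZMod p, ω ^ y.val = 0 := by
  have h1 : 1 < p := (Fact.out : p.Prime).one_lt
  rw [← hprim.geom_sum_eq_zero h1]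
  refine Finset.sum_nbij' (fun y => y.val) (fun i => (i : ZMod p)) ?_ ?_ ?_ ?_ ?_
  · intro y _; exact Finset.mem_range.2 (ZMod.val_lt y)
  · intro i _; exact Finset.mem_univ _
  · intro y _; exact ZMod.natCast_rightInverse y
  · intro i hi; exact ZMod.val_cast_of_lt (Finset.mem_range.1 hi)
  · intro y _; rfl

lemma sum_epow_mul_right (hprim : IsPrimitiveRoot ω p) {x : ZMod p} (hx : x ≠ 0) :
    ∑ b : ZMod p, ω ^ (b * x).val = 0 := by
  have hb := (Equiv.mulRight₀ x hx).bijective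
  have := Fintype.sum_bijective (fun b : ZMod p => b * x) hb
    (fun b => ω ^ (b * x).val) (fun y => ω ^ y.val) (fun b => rfl)
  rw [this, sum_epow hprim]

lemma sum_epow_mul_left (hprim : IsPrimitiveRoot ω p) {c : ZMod p} (hc : c ≠ 0) :
    ∑ x : ZMod p, ω ^ (c * x).val = 0 := by
  simp only [mul_comm c]
  exact sum_epow_mul_right hprim hc

end Helpers

theorem perfect_isometry_iff_linear_bijection
    (p : ℕ) [Fact p.Prime] (ω : ℂ) (hω : ω = Complex.exp (2 * Real.pi * Complex.I / p))
    (f : ZMod p → ZMod p) (hf : Function.Bijective f) :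
    (∀ a b : ZMod p,
      IsIntegral ℤ ((1 / (p : ℂ)) * ∑ x : ZMod p, ω ^ (a * f x + b * x).val)) ↔
      ∃ α β : ZMod p, α ≠ 0 ∧ ∀ x : ZMod p, f x = α * x + β := by
  have hppos : 0 < p := (Fact.out : p.Prime).pos
  have hprim : IsPrimitiveRoot ω p := by
    rw [hω]; exact Complex.isPrimitiveRoot_exp p hppos.ne'
  have hωp : ω ^ p = 1 := hprim.pow_eq_one
  have hpC : (p:ℂ) ≠ 0 := by exact_mod_cast hppos.ne'
  constructor
  · intro h
    have key : ∀ b : ZMod p,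
        (∑ x : ZMod p, ω ^ (f x + b * x).val = 0) ∨ ∀ x, f x + b * x = f 0 := by
      intro b
      have h1 := dichotomy hprim (fun x => f x + b * x) (by
        have := h 1 b
        simpa only [one_mul] using this)
      rcases h1 with h1 | h1
      · exact Or.inl h1
      · right; intro x; simpa using h1 x
    by_cases hlin : ∃ b : ZMod p, ∀ x, f x + b * x = f 0
    · obtain ⟨b, hb⟩ := hlin
      refine ⟨-b, f 0, ?_, ?_⟩
      · intro hb0
        have hbz : b = 0 := by rwa [neg_eq_zero] at hb0
        have h10 : f 1 = f 0 := by
          have := hb 1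
          rwa [hbz, zero_mul, add_zero] at this
        have : (1 : ZMod p) = 0 := hf.injective h10
        exact one_ne_zero this
      · intro x
        have := hb x
        linear_combination this
    · exfalso
      have hz : ∀ b : ZMod p, ∑ x : ZMod p, ω ^ (f x + b * x).val = 0 := by
        intro b
        rcases key b with h1 | h1
        · exact h1
        · exact absurd ⟨b, h1⟩ hlin
      have hsum : ∑ b : ZMod p, ∑ x : ZMod p, ω ^ (f x + b * x).val = 0 := by
        simp [hz]
      rw [Finset.sum_comm] at hsum
      have hswap : ∀ x : ZMod p, ∑ b : ZMod p, ω ^ (f x + b * x).val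
          = ω ^ (f x).val * ∑ b : ZMod p, ω ^ (b * x).val := by
        intro x
        rw [Finset.mul_sum]
        exact Finset.sum_congr rfl fun b _ => epow_add hωp (f x) (b * x)
      rw [Finset.sum_congr rfl fun x _ => hswap x] at hsum
      have hinner : ∀ x : ZMod p, (∑ b : ZMod p, ω ^ (b * x).val)
          = if x = 0 then (p:ℂ) else 0 := by
        intro x
        by_cases hx : x = 0
        · simp [hx, ZMod.card]
        · simp [hx, sum_epow_mul_right hprim hx]
      rw [Finset.sum_congr rfl fun x _ => by rw [hinner x]] at hsum
      rw [Finset.sum_congr rfl fun x _ => (mul_ite _ _ _ (0:ℂ)).trans (by rw [mul_zero])] at hsum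
      rw [Finset.sum_ite_eq' Finset.univ (0 : ZMod p)
        (fun x => ω ^ (f x).val * (p:ℂ))] at hsum
      simp only [Finset.mem_univ, if_true] at hsum
      rcases mul_eq_zero.mp hsum with h0 | h0
      · exact pow_ne_zero _ (hprim.ne_zero hppos.ne') h0
      · exact hpC h0
  · rintro ⟨α, β, hα, hfx⟩ a b
    have hrw : ∀ x : ZMod p, a * f x + b * x = (a * α + b) * x + a * β := fun x => by
      rw [hfx x]; ring
    by_cases hc : a * α + b = 0
    · have hconst : ∀ x : ZMod p, a * f x + b * x = a * β := fun x => by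
        rw [hrw x, hc, zero_mul, zero_add]
      have : ∑ x : ZMod p, ω ^ (a * f x + b * x).val = (p:ℂ) * ω ^ (a * β).val := by
        rw [Finset.sum_congr rfl fun x _ => by rw [hconst x]]
        rw [Finset.sum_const, Finset.card_univ, ZMod.card, nsmul_eq_mul]
      rw [this, show (1 / (p:ℂ)) * ((p:ℂ) * ω ^ (a * β).val) = ω ^ (a * β).val by
        field_simp]
      exact (hprim.isIntegral hppos).pow _
    · have : ∑ x : ZMod p, ω ^ (a * f x + b * x).val = 0 := by
        calc ∑ x : ZMod p, ω ^ (a * f x + b * x).val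
            = ∑ x : ZMod p, ω ^ ((a * α + b) * x).val * ω ^ (a * β).val :=
              Finset.sum_congr rfl fun x _ => by rw [hrw x, epow_add hωp]
          _ = (∑ x : ZMod p, ω ^ ((a * α + b) * x).val) * ω ^ (a * β).val :=
              (Finset.sum_mul _ _ _).symm
          _ = 0 := by rw [sum_epow_mul_left hprim hc, zero_mul]
      rw [this, mul_zero]
      exact isIntegral_zero
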